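/- Let a_t be nonnegative reals with a_t ≤ M for all t, let k ∈ ℕ, q ∈ [0,1), and define S_t = Σ_{s=1}^t a_s (with S_t = 0 for t ≤ 0). Then Σ_{t=1}^T a_t / (1 + S_{t-k})^q ≤ S_T^{1-q}/(1-q) + k·M. -/

import Mathlib

open Finset

/-- weighted AM-GM consequence: key step inequality. -/
lemma amgm_key {q x y : ℝ} (hq0 : 0 ≤ q) (hq1 : q ≤ 1) (hy : 0 ≤ y) (hxy : y ≤ x)
    (hx : 0 < x) : (1 - q) * (x - y) ≤ (x ^ (1 - q) - y ^ (1 - q)) * x ^ q := by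
  have h := @Real.geom_mean_le_arith_mean2_weighted q (1-q) x y hq0 (by linarith) hx.le hy (by ring)
  have hxx : x ^ (1 - q) * x ^ q = x := by
    rw [← Real.rpow_add hx]; norm_num
  have hyx : y ^ (1 - q) * x ^ q = x ^ q * y ^ (1 - q) := by ring
  nlinarith [h, hxx]

lemma real_rpow_add_le {x y p : ℝ} (hx : 0 ≤ x) (hy : 0 ≤ y) (hp : 0 ≤ p) (hp1 : p ≤ 1) :
    (x + y) ^ p ≤ x ^ p + y ^ p := by
  have h := NNReal.rpow_add_le_add_rpow x.toNNReal y.toNNReal hp hp1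
  have := (NNReal.coe_le_coe).2 h
  push_cast [NNReal.coe_rpow] at this
  rwa [Real.coe_toNNReal x hx, Real.coe_toNNReal y hy] at this

/-- Abel-type comparison: if partial sums of `d` are bounded by `C` and `w` is a
nonincreasing nonnegative weight, then `∑ d u * w u ≤ C * w 1`. -/
lemma abel_aux (w d : ℕ → ℝ) (C : ℝ) (hw0 : ∀ u, 0 ≤ w u) (hwm : ∀ u, w (u + 1) ≤ w u)
    (hC : ∀ n, (∑ u ∈ Icc 1 n, d u) ≤ C) :
    ∀ n, ∑ u ∈ Icc 1 n, d u * w u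
      ≤ C * w 1 - (C - ∑ u ∈ Icc 1 n, d u) * w (n + 1) := by
  intro n
  induction n with
  | zero => simp
  | succ n ih =>
    rw [Finset.sum_Icc_succ_top (Nat.le_add_left 1 n),
        Finset.sum_Icc_succ_top (Nat.le_add_left 1 n)]
    have h1 := hC (n + 1)
    rw [Finset.sum_Icc_succ_top (Nat.le_add_left 1 n)] at h1
    have h2 := hwm (n + 1)
    have h3 := hw0 (n + 2)
    nlinarith [ih, h2, h3, h1]

lemma adagrad_basic (a : ℕ → ℝ) (ha : ∀ t, 0 ≤ a t) (q : ℝ) (hq0 : 0 ≤ q) (hq1 : q < 1)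
    (S : ℕ → ℝ) (hS : ∀ t, S t = ∑ s ∈ Finset.Icc 1 t, a s) :
    ∀ n, ∑ u ∈ Icc 1 n, a u / (1 + S u) ^ q
      ≤ ((1 + S n) ^ (1 - q) - 1) / (1 - q) := by
  have hS0 : S 0 = 0 := by simp [hS]
  have hSnn : ∀ n, 0 ≤ S n := fun n => by
    rw [hS]; exact Finset.sum_nonneg fun i _ => ha i
  have hSstep : ∀ n, S (n + 1) = S n + a (n + 1) := fun n => by
    rw [hS, hS, Finset.sum_Icc_succ_top (Nat.le_add_left 1 n)]
  intro n
  induction n with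
  | zero => simp [hS0, Real.one_rpow]
  | succ n ih =>
    rw [Finset.sum_Icc_succ_top (Nat.le_add_left 1 n)]
    have hx : (0:ℝ) < 1 + S (n + 1) := by linarith [hSnn (n+1)]
    have hy : (0:ℝ) ≤ 1 + S n := by linarith [hSnn n]
    have hxy : (1:ℝ) + S n ≤ 1 + S (n + 1) := by
      have := ha (n + 1); rw [hSstep n]; linarith
    have key := amgm_key hq0 hq1.le hy hxy hx
    have hxq : (0:ℝ) < (1 + S (n + 1)) ^ q := Real.rpow_pos_of_pos hx q
    have hstep : a (n + 1) / (1 + S (n + 1)) ^ q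
        ≤ ((1 + S (n + 1)) ^ (1 - q) - (1 + S n) ^ (1 - q)) / (1 - q) := by
      rw [div_le_div_iff₀ hxq (by linarith : (0:ℝ) < 1 - q)]
      have hd : 1 + S (n+1) - (1 + S n) = a (n + 1) := by rw [hSstep n]; ring
      nlinarith [key]
    calc ∑ u ∈ Icc 1 n, a u / (1 + S u) ^ q + a (n+1) / (1 + S (n+1)) ^ q
        ≤ ((1 + S n) ^ (1 - q) - 1) / (1 - q)
          + ((1 + S (n + 1)) ^ (1 - q) - (1 + S n) ^ (1 - q)) / (1 - q) :=
          add_le_add ih hstep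
      _ = ((1 + S (n + 1)) ^ (1 - q) - 1) / (1 - q) := by ring

/-- AdaGrad lemma with delayed denominators (uniformly bounded increments). -/
theorem adagrad_lemma_delayed (M : ℝ) (hM : 0 ≤ M) (a : ℕ → ℝ)
    (ha : ∀ t, 0 ≤ a t) (haM : ∀ t, a t ≤ M)
    (k : ℕ) (q : ℝ) (hq0 : 0 ≤ q) (hq1 : q < 1)
    (S : ℕ → ℝ) (hS : ∀ t, S t = ∑ s ∈ Finset.Icc 1 t, a s) (T : ℕ) :
    ∑ t ∈ Finset.Icc 1 T, a t / (1 + S (t - k)) ^ q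
      ≤ S T ^ (1 - q) / (1 - q) + k * M := by
  have h1q : (0:ℝ) < 1 - q := by linarith
  have hS0 : S 0 = 0 := by simp [hS]
  have hSnn : ∀ n, 0 ≤ S n := fun n => by
    rw [hS]; exact Finset.sum_nonneg fun i _ => ha i
  have hSstep : ∀ n, S (n + 1) = S n + a (n + 1) := fun n => by
    rw [hS, hS, Finset.sum_Icc_succ_top (Nat.le_add_left 1 n)]
  have hSmono : ∀ m n, m ≤ n → S m ≤ S n := by
    intro m n hmn
    rw [hS, hS]
    exact Finset.sum_le_sum_of_subset_of_nonneg
      (Finset.Icc_subset_Icc_right hmn) (fun i _ _ => ha i)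
  have hSshift : ∀ n j, S (n + j) ≤ S n + j * M := by
    intro n j
    induction j with
    | zero => simp
    | succ j ih =>
      have := hSstep (n + j)
      have := haM (n + j + 1)
      push_cast
      calc S (n + (j + 1)) = S (n + j) + a (n + j + 1) := by
            rw [← hSstep (n + j)]; ring_nf
        _ ≤ S n + j * M + M := by push_cast at ih; linarith
        _ = S n + (j + 1) * M := by ring
  have hSTnn : 0 ≤ S T ^ (1 - q) / (1 - q) :=
    div_nonneg (Real.rpow_nonneg (hSnn T) _) h1q.le
  rcases le_or_gt T k with hTk | hkT
  · -- easy case: T ≤ k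
    have heq : ∑ t ∈ Finset.Icc 1 T, a t / (1 + S (t - k)) ^ q
        = ∑ t ∈ Finset.Icc 1 T, a t := by
      apply Finset.sum_congr rfl
      intro t ht
      have : t - k = 0 := by
        simp only [Finset.mem_Icc] at ht; omega
      rw [this, hS0]
      norm_num [Real.one_rpow]
    rw [heq, ← hS T]
    have : S T ≤ k * M := by
      have := hSshift 0 T
      simp only [zero_add, hS0] at this
      calc S T ≤ T * M := by simpa using this
        _ ≤ k * M := by
          apply mul_le_mul_of_nonneg_right _ hM
          exact_mod_cast hTk
    linarith
  · -- main case: k < T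
    set w : ℕ → ℝ := fun u => ((1 + S u) ^ q)⁻¹ with hw
    have hxpos : ∀ u, (0:ℝ) < (1 + S u) ^ q := fun u =>
      Real.rpow_pos_of_pos (by linarith [hSnn u]) q
    have hw0 : ∀ u, 0 ≤ w u := fun u => (inv_nonneg).2 (hxpos u).le
    have hwm : ∀ u, w (u + 1) ≤ w u := by
      intro u
      apply inv_anti₀ (hxpos u)
      apply Real.rpow_le_rpow (by linarith [hSnn u]) _ hq0
      linarith [hSmono u (u+1) (Nat.le_succ u)]
    have hw1 : w 1 ≤ 1 := by
      rw [hw]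
      apply inv_le_one_of_one_le₀
      exact Real.one_le_rpow (by linarith [hSnn 1]) hq0
    -- split the sum
    have hIcc : ∀ n : ℕ, Finset.Icc 1 n = Finset.Ioc 0 n := fun n => by
      rw [← Finset.Icc_add_one_left_eq_Ioc]; rfl
    have hsplit : ∑ t ∈ Finset.Icc 1 T, a t / (1 + S (t - k)) ^ q
        = (∑ t ∈ Finset.Ioc 0 k, a t / (1 + S (t - k)) ^ q)
          + ∑ t ∈ Finset.Ioc k T, a t / (1 + S (t - k)) ^ q := by
      rw [hIcc, Finset.sum_Ioc_consecutive _ (Nat.zero_le k) hkT.le]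
    -- first part equals S k
    have hfirst : ∑ t ∈ Finset.Ioc 0 k, a t / (1 + S (t - k)) ^ q = S k := by
      rw [← hIcc, hS]
      apply Finset.sum_congr rfl
      intro t ht
      have : t - k = 0 := by
        simp only [Finset.mem_Icc] at ht; omega
      rw [this, hS0]
      norm_num [Real.one_rpow]
    -- second part: reindex
    have hre : ∑ t ∈ Finset.Ioc k T, a t / (1 + S (t - k)) ^ q
        = ∑ u ∈ Finset.Icc 1 (T - k), a (u + k) / (1 + S u) ^ q := by
      rw [hIcc]
      have hset : Finset.Ioc k T = (Finset.Ioc 0 (T - k)).map (addRightEmbedding k) := by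
        rw [Finset.map_add_right_Ioc]
        congr 1 <;> omega
      rw [hset, Finset.sum_map]
      apply Finset.sum_congr rfl
      intro u _
      simp [addRightEmbedding]
    -- Abel comparison
    have habel : ∑ u ∈ Finset.Icc 1 (T - k), (a (u + k) - a u) * w u
        ≤ k * M - S k := by
      have hC : ∀ n, (∑ u ∈ Finset.Icc 1 n, (a (u + k) - a u)) ≤ k * M - S k := by
        intro n
        have hsum : ∑ u ∈ Finset.Icc 1 n, a (u + k) = S (n + k) - S k := by
          induction n with
          | zero => simp
          | succ n ih =>
            rw [Finset.sum_Icc_succ_top (Nat.le_add_left 1 n), ih]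
            have : S (n + 1 + k) = S (n + k) + a (n + k + 1) := by
              have := hSstep (n + k); rw [← this]; ring_nf
            rw [this]
            ring_nf
        rw [Finset.sum_sub_distrib, hsum, ← hS n]
        have h1 := hSshift n k
        have h2 := hSmono k (n + k) (Nat.le_add_left k n)
        have h3 := hSnn n
        -- S (n+k) ≤ S n + k M ; need S(n+k) - S k - S n ≤ kM - S k
        linarith
      have h := abel_aux w (fun u => a (u + k) - a u) (k * M - S k) hw0 hwm hC (T - k)
      have hnn : 0 ≤ (k * M - S k - ∑ u ∈ Finset.Icc 1 (T - k), (a (u + k) - a u))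
          * w (T - k + 1) :=
        mul_nonneg (by linarith [hC (T - k)]) (hw0 _)
      have hCnn : 0 ≤ k * M - S k := by
        have := hC 0; simpa using this
      calc ∑ u ∈ Finset.Icc 1 (T - k), (a (u + k) - a u) * w u
          ≤ (k * M - S k) * w 1 - (k * M - S k
              - ∑ u ∈ Finset.Icc 1 (T - k), (a (u + k) - a u)) * w (T - k + 1) := h
        _ ≤ (k * M - S k) * w 1 := by linarith
        _ ≤ k * M - S k := by nlinarith [hw0 1]
    -- put it together
    have hsecond : ∑ u ∈ Finset.Icc 1 (T - k), a (u + k) / (1 + S u) ^ q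
        ≤ ∑ u ∈ Finset.Icc 1 (T - k), a u / (1 + S u) ^ q + (k * M - S k) := by
      have : ∀ u, a (u + k) / (1 + S u) ^ q
          = a u / (1 + S u) ^ q + (a (u + k) - a u) * w u := by
        intro u
        rw [hw, div_eq_mul_inv, div_eq_mul_inv]
        ring
      rw [Finset.sum_congr rfl (fun u _ => this u), Finset.sum_add_distrib]
      linarith [habel]
    have hbasic := adagrad_basic a ha q hq0 hq1 S hS (T - k)
    have hfinal : ((1 + S (T - k)) ^ (1 - q) - 1) / (1 - q) ≤ S T ^ (1 - q) / (1 - q) := by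
      gcongr
      have h1 : (1 + S (T - k)) ^ (1 - q) ≤ 1 + S (T - k) ^ (1 - q) := by
        have := real_rpow_add_le zero_le_one (hSnn (T - k))
          h1q.le (by linarith : 1 - q ≤ 1)
        simpa [Real.one_rpow] using this
      have h2 : S (T - k) ^ (1 - q) ≤ S T ^ (1 - q) :=
        Real.rpow_le_rpow (hSnn _) (hSmono _ _ (Nat.sub_le T k)) h1q.le
      linarith
    rw [hsplit, hfirst, hre]
    calc S k + ∑ u ∈ Finset.Icc 1 (T - k), a (u + k) / (1 + S u) ^ q
        ≤ S k + (∑ u ∈ Finset.Icc 1 (T - k), a u / (1 + S u) ^ q + (k * M - S k)) := by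
          linarith [hsecond]
      _ = ∑ u ∈ Finset.Icc 1 (T - k), a u / (1 + S u) ^ q + k * M := by ring
      _ ≤ ((1 + S (T - k)) ^ (1 - q) - 1) / (1 - q) + k * M := by linarith [hbasic]
      _ ≤ S T ^ (1 - q) / (1 - q) + k * M := by linarith [hfinal]
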